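/- Let n > 1, let F = GF(2^n), and let k be a field of characteristic 2 with an injective ring homomorphism ι : F → k. With g(x,y) = x + y + x^(2^(n-1))·y^(2^(n-1)), f(x,y) = g(x,y) + 1, ℓ̃_{a,b} = ι(a)·x + ι(b)·y + ι(g(a,b))·z, and c̃₀ = ∏_{(a,b) ≠ (0,0)} ℓ̃_{a,b} in k[x,y,z], there exists a polynomial ũ ∈ k[x,y,z] such that ũ^(2^n − 1) = c̃₀ and ũ is fixed by the k-algebra automorphism τ_A (x ↦ ι(a)·x + ι(b)·y + ι(f(a,b))·z, y ↦ ι(c)·x + ι(d)·y + ι(f(c,d))·z, z ↦ z) for every A = [[a,b],[c,d]] ∈ SL(2, F). -/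

import Mathlib

theorem aux_charF {n : ℕ} (F : Type*) [Field F] [Fintype F]
    (hF : Fintype.card F = 2 ^ n) (hn : 1 < n) : CharP F 2 := by
  obtain ⟨m, hp, hcard⟩ := FiniteField.card F (ringChar F)
  have hdvd : ringChar F ∣ 2 ^ n := by
    rw [← hF, hcard]
    exact dvd_pow_self _ m.pos.ne'
  have h2 : ringChar F = 2 :=
    (Nat.prime_dvd_prime_iff_eq hp Nat.prime_two).mp (hp.dvd_of_dvd_pow hdvd)
  exact h2 ▸ ringChar.charP F

theorem aux_hq {n : ℕ} {F : Type*} [Field F] [Fintype F]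
    (hF : Fintype.card F = 2 ^ n) (x : F) : x ^ (2 ^ n) = x := by
  rw [← hF]; exact FiniteField.pow_card x

section main
variable {n : ℕ} {F : Type*} [Field F] [Fintype F]
  (hF : Fintype.card F = 2 ^ n) (hn : 1 < n)
  (g f : F → F → F)
  (hg : ∀ x y : F, g x y = x + y + x ^ 2 ^ (n - 1) * y ^ 2 ^ (n - 1))
  (hf : ∀ x y : F, f x y = g x y + 1)

include hF hn hg

theorem aux_gsq (x y : F) : g x y ^ 2 = x ^ 2 + x * y + y ^ 2 := by
  haveI := aux_charF F hF hn
  have h2 : (2 : F) = 0 := by exact_mod_cast CharP.cast_eq_zero F 2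
  have he : 2 ^ (n - 1) * 2 = 2 ^ n := by
    rw [← pow_succ]; congr 1; omega
  have hxy : (x ^ 2 ^ (n - 1) * y ^ 2 ^ (n - 1)) ^ 2 = x * y := by
    rw [mul_pow, ← pow_mul, ← pow_mul, he, aux_hq hF, aux_hq hF]
  rw [hg]
  linear_combination hxy + (x * y + x ^ 2 ^ (n-1) * y ^ 2 ^ (n-1) * (x + y)) * h2

theorem aux_gscal (l x y : F) : g (l * x) (l * y) = l * g x y := by
  have he : 2 ^ (n - 1) * 2 = 2 ^ n := by
    rw [← pow_succ]; congr 1; omega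
  have : (l * x) ^ 2 ^ (n-1) * (l * y) ^ 2 ^ (n-1)
      = l ^ (2 ^ n) * (x ^ 2 ^ (n-1) * y ^ 2 ^ (n-1)) := by
    rw [mul_pow, mul_pow, ← he, pow_mul]; ring
  rw [hg, hg, this, aux_hq hF]; ring

include hf

theorem aux_gident (a b α β γ δ : F) (hdet : α * δ - β * γ = 1) :
    g (a * α + b * γ) (a * β + b * δ) = a * f α β + b * f γ δ + g a b := by
  haveI := aux_charF F hF hn
  have h2 : (2 : F) = 0 := by exact_mod_cast CharP.cast_eq_zero F 2
  have hinj : Function.Injective (fun x : F => x ^ 2) := by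
    intro x y h
    simpa using frobenius_inj F 2 (by simpa [frobenius_def] using h)
  apply hinj
  simp only
  rw [aux_gsq hF hn g hg, hf, hf]
  have e1 : (a * (g α β + 1) + b * (g γ δ + 1) + g a b) ^ 2
      = a ^ 2 * (g α β + 1) ^ 2 + b ^ 2 * (g γ δ + 1) ^ 2 + g a b ^ 2 := by
    have hsq2 : ∀ u v : F, (u + v) ^ 2 = u ^ 2 + v ^ 2 := fun u v => by
      linear_combination (u * v) * h2
    rw [hsq2, hsq2, mul_pow, mul_pow]
  rw [e1]
  have f1 : (g α β + 1) ^ 2 = α ^ 2 + α * β + β ^ 2 + 1 := by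
    linear_combination aux_gsq hF hn g hg α β + (g α β) * h2
  have f2 : (g γ δ + 1) ^ 2 = γ ^ 2 + γ * δ + δ ^ 2 + 1 := by
    linear_combination aux_gsq hF hn g hg γ δ + (g γ δ) * h2
  rw [f1, f2, aux_gsq hF hn g hg]
  linear_combination (a * b) * hdet +
    (a * b * α * γ + a * b * β * δ + a * b * β * γ - a ^ 2 - b ^ 2) * h2

end main

theorem aux_prodF (F : Type*) [Field F] [Fintype F] [DecidableEq F] (h2 : CharP F 2) :
    ∏ a ∈ Finset.univ.erase (0 : F), a = 1 := by
  have h := FiniteField.prod_univ_units_id_eq_neg_one (K := F)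
  have hcast : ∏ x : Fˣ, (x : F) = -1 := by
    simpa using congrArg Units.val h
  have htr : ∏ a ∈ Finset.univ.erase (0 : F), a = ∏ x : Fˣ, (x : F) := by
    refine Finset.prod_nbij' (fun a => if h : a = (0:F) then 1 else Units.mk0 a h)
      (fun x => (x : F)) (fun a _ => Finset.mem_univ _)
      (fun x _ => Finset.mem_erase.mpr ⟨x.ne_zero, Finset.mem_univ _⟩) ?_ ?_ ?_
    · intro a ha
      rw [dif_neg (Finset.mem_erase.mp ha).1, Units.val_mk0]
    · intro x _
      rw [dif_neg x.ne_zero]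
      exact Units.ext rfl
    · intro a ha
      rw [dif_neg (Finset.mem_erase.mp ha).1, Units.val_mk0]
  rw [htr, hcast, CharTwo.neg_eq]

open MvPolynomial in
/-- The lifted invariant `c̃₀ = ∏_{(a,b)≠0} ℓ̃_{a,b}` admits a `(2^n - 1)`-th root
`ũ ∈ k[x,y,z]`, and this root is invariant under the action `τ_A` of `H₁ ≅ SL(2, GF(2^n))`. -/
theorem stmt_11 (n : ℕ) (hn : 1 < n) (F : Type*) [Field F] [Fintype F] [DecidableEq F]
    (hF : Fintype.card F = 2 ^ n)
    (k : Type*) [Field k] [CharP k 2] (ι : F →+* k) (hι : Function.Injective ι)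
    (g f : F → F → F)
    (hg : ∀ x y : F, g x y = x + y + x ^ 2 ^ (n - 1) * y ^ 2 ^ (n - 1))
    (hf : ∀ x y : F, f x y = g x y + 1)
    (ℓ : F → F → MvPolynomial (Fin 3) k)
    (hℓ : ∀ a b : F, ℓ a b = C (ι a) * X 0 + C (ι b) * X 1 + C (ι (g a b)) * X 2)
    (c0 : MvPolynomial (Fin 3) k)
    (hc0 : c0 = ∏ v ∈ Finset.univ.erase (0 : F × F), ℓ v.1 v.2)
    (τ : Matrix.SpecialLinearGroup (Fin 2) F →
      MvPolynomial (Fin 3) k →ₐ[k] MvPolynomial (Fin 3) k)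
    (hτ : ∀ A : Matrix.SpecialLinearGroup (Fin 2) F,
      τ A = aeval
        ![C (ι (A.1 0 0)) * X 0 + C (ι (A.1 0 1)) * X 1 + C (ι (f (A.1 0 0) (A.1 0 1))) * X 2,
          C (ι (A.1 1 0)) * X 0 + C (ι (A.1 1 1)) * X 1 + C (ι (f (A.1 1 0) (A.1 1 1))) * X 2,
          X 2]) :
    ∃ u : MvPolynomial (Fin 3) k, u ^ (2 ^ n - 1) = c0 ∧
      ∀ A : Matrix.SpecialLinearGroup (Fin 2) F, τ A u = u := by
  haveI char2 := aux_charF F hF hn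
  set P : MvPolynomial (Fin 3) k := ∏ b : F, ℓ 1 b with hP
  refine ⟨ℓ 0 1 * P, ?_, ?_⟩
  · -- (ℓ 0 1 * P) ^ (2^n - 1) = c0
    have hscal : ∀ l a b : F, ℓ (l * a) (l * b) = C (ι l) * ℓ a b := by
      intro l a b
      rw [hℓ, hℓ, aux_gscal hF hn g hg]
      simp only [map_mul, C_mul]
      ring
    have hcarde : (Finset.univ.erase (0 : F)).card = 2 ^ n - 1 := by
      rw [Finset.card_erase_of_mem (Finset.mem_univ _), Finset.card_univ, hF]
    have hprodF := aux_prodF F char2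
    have hsplit : (Finset.univ.erase (0 : F × F)) =
        ((Finset.univ.erase (0 : F)) ×ˢ Finset.univ) ∪
          ({(0 : F)} ×ˢ (Finset.univ.erase (0 : F))) := by
      ext ⟨a, b⟩
      simp [Prod.ext_iff, Prod.mk_eq_zero]
      tauto
    have hdisj : Disjoint ((Finset.univ.erase (0 : F)) ×ˢ (Finset.univ : Finset F))
        (({(0 : F)} : Finset F) ×ˢ (Finset.univ.erase (0 : F))) := by
      rw [Finset.disjoint_left]
      rintro ⟨a, b⟩ h1 h2
      simp only [Finset.mem_product, Finset.mem_erase, Finset.mem_singleton] at h1 h2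
      exact h1.1.1 h2.1
    rw [hc0, hsplit, Finset.prod_union hdisj, Finset.prod_product, Finset.prod_product]
    have inner : ∀ a ∈ Finset.univ.erase (0 : F),
        ∏ b : F, ℓ a b = C (ι a) ^ (2 ^ n) * P := by
      intro a ha
      have ha0 : a ≠ 0 := (Finset.mem_erase.mp ha).1
      have hb := Fintype.prod_bijective (fun c : F => a * c) (Equiv.mulLeft₀ a ha0).bijective
        (fun c => C (ι a) * ℓ 1 c) (fun b => ℓ a b)
        (fun c => by show C (ι a) * ℓ 1 c = ℓ a (a * c); rw [← hscal a 1 c, mul_one])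
      rw [← hb, Finset.prod_mul_distrib, Finset.prod_const, Finset.card_univ, hF]
    have hCprod : ∀ s : Finset F,
        ∏ x ∈ s, (C (ι x) : MvPolynomial (Fin 3) k) = C (ι (∏ x ∈ s, x)) := fun s =>
      (map_prod ((C : k →+* MvPolynomial (Fin 3) k).comp ι) id s).symm
    have hsnd : ∏ b ∈ Finset.univ.erase (0 : F), ℓ 0 b
        = C (ι (∏ b ∈ Finset.univ.erase (0 : F), b)) * (ℓ 0 1) ^ (2 ^ n - 1) := by
      rw [Finset.prod_congr rfl (fun b hb => by
          rw [show ℓ 0 b = C (ι b) * ℓ 0 1 from by rw [← hscal b 0 1, mul_zero, mul_one]]),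
        Finset.prod_mul_distrib, Finset.prod_const, hcarde, hCprod]
    rw [Finset.prod_congr rfl inner, Finset.prod_mul_distrib, Finset.prod_const, hcarde,
      Finset.prod_pow, hCprod, hprodF, Finset.prod_singleton]
    simp only
    rw [hsnd, hprodF]
    simp [mul_pow]
    ring
  · -- invariance
    intro A
    have h2F : (2 : F) = 0 := by exact_mod_cast CharP.cast_eq_zero F 2
    have hscal : ∀ l a b : F, ℓ (l * a) (l * b) = C (ι l) * ℓ a b := by
      intro l a b
      rw [hℓ, hℓ, aux_gscal hF hn g hg]
      simp only [map_mul, C_mul]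
      ring
    have hCf : ∀ (s : Finset F) (h : F → F),
        ∏ x ∈ s, (C (ι (h x)) : MvPolynomial (Fin 3) k) = C (ι (∏ x ∈ s, h x)) := fun s h =>
      (map_prod ((C : k →+* MvPolynomial (Fin 3) k).comp ι) h s).symm
    have hprodF := aux_prodF F char2
    set α := A.1 0 0 with hα'
    set β := A.1 0 1 with hβ'
    set γ := A.1 1 0 with hγ'
    set δ := A.1 1 1 with hδ'
    have hdet : α * δ - β * γ = 1 := by
      have h := A.2
      rwa [Matrix.det_fin_two] at h
    have hL : ∀ a b : F, τ A (ℓ a b) = ℓ (a * α + b * γ) (a * β + b * δ) := by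
      intro a b
      rw [hτ, hℓ a b, hℓ (a * α + b * γ) (a * β + b * δ),
        aux_gident hF hn g f hg hf a b α β γ δ hdet]
      simp only [map_add, map_mul, aeval_C, aeval_X, algebraMap_eq,
        Matrix.cons_val_zero, Matrix.cons_val_one, Matrix.head_cons,
        Matrix.cons_val_two, Matrix.tail_cons, map_one, C_add, C_mul, C_1]
      ring
    have hτu : τ A (ℓ 0 1 * P) = ℓ γ δ * ∏ b : F, ℓ (α + b * γ) (β + b * δ) := by
      rw [map_mul, map_prod, hL 0 1]
      congr 1
      · rw [zero_mul, one_mul, zero_mul, one_mul, zero_add, zero_add]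
      · exact Finset.prod_congr rfl fun b _ => by rw [hL 1 b, one_mul, one_mul]
    rw [hτu]
    by_cases hγ : γ = 0
    · -- lower-left entry zero
      have hαδ : δ * α = 1 := by rw [mul_comm, ← hdet, hγ]; ring
      have hα : α ≠ 0 := fun h => by rw [h, mul_zero] at hαδ; exact one_ne_zero hαδ.symm
      have hδ : δ ≠ 0 := fun h => by rw [h, zero_mul] at hαδ; exact one_ne_zero hαδ.symm
      simp only [hγ, mul_zero, add_zero]
      have e1 : ℓ 0 δ = C (ι δ) * ℓ 0 1 := by
        rw [← hscal δ 0 1, mul_zero, mul_one]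
      have hbij : Function.Bijective (fun c : F => δ⁻¹ * (α * c - β)) := by
        apply Finite.injective_iff_bijective.mp
        intro c c' h
        have h1 := mul_left_cancel₀ (inv_ne_zero hδ) h
        exact mul_left_cancel₀ hα (sub_left_inj.mp h1)
      have e2 : ∏ b : F, ℓ α (β + b * δ) = C (ι α) ^ 2 ^ n * P := by
        have hb := Fintype.prod_bijective (fun c : F => δ⁻¹ * (α * c - β)) hbij
          (fun c => C (ι α) * ℓ 1 c) (fun b => ℓ α (β + b * δ))
          (fun c => by
            show C (ι α) * ℓ 1 c = ℓ α (β + δ⁻¹ * (α * c - β) * δ)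
            have hc : β + δ⁻¹ * (α * c - β) * δ = α * c := by field_simp; ring
            rw [hc, ← hscal α 1 c, mul_one])
        rw [← hb, Finset.prod_mul_distrib, Finset.prod_const, Finset.card_univ, hF]
      rw [e1, e2]
      have e3 : (C (ι δ) : MvPolynomial (Fin 3) k) * C (ι α) ^ 2 ^ n = 1 := by
        rw [← map_pow, ← map_pow, ← map_mul, ← map_mul, aux_hq hF, hαδ, map_one, map_one]
      calc C (ι δ) * ℓ 0 1 * (C (ι α) ^ 2 ^ n * P)
          = C (ι δ) * C (ι α) ^ 2 ^ n * (ℓ 0 1 * P) := by ring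
        _ = ℓ 0 1 * P := by rw [e3, one_mul]
    · -- lower-left entry nonzero
      set b₀ := α / γ with hb₀
      have hb0 : α + b₀ * γ = 0 := by
        rw [hb₀, div_mul_cancel₀ α hγ, CharTwo.add_self_eq_zero]
      have hb0' : β + b₀ * δ = γ⁻¹ := by
        rw [hb₀]
        field_simp
        linear_combination hdet + β * γ * h2F
      have hne : ∀ b : F, b ≠ b₀ → α + b * γ ≠ 0 := by
        intro b hb h
        apply hb
        rw [hb₀, eq_div_iff hγ]
        linear_combination -h + (b * γ) * h2F
      rw [← Finset.mul_prod_erase Finset.univ _ (Finset.mem_univ b₀), hb0, hb0']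
      have e0 : ℓ 0 γ⁻¹ = C (ι γ⁻¹) * ℓ 0 1 := by
        rw [← hscal γ⁻¹ 0 1, mul_zero, mul_one]
      have e1 : ℓ γ δ = C (ι γ) * ℓ 1 (δ / γ) := by
        have h : γ * (δ / γ) = δ := by field_simp
        rw [← hscal γ 1 (δ / γ), mul_one, h]
      have step1 : ∏ b ∈ Finset.univ.erase b₀, ℓ (α + b * γ) (β + b * δ)
          = (∏ b ∈ Finset.univ.erase b₀, (C (ι (α + b * γ)) : MvPolynomial (Fin 3) k)) *
            ∏ b ∈ Finset.univ.erase b₀, ℓ 1 ((β + b * δ) / (α + b * γ)) := by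
        rw [← Finset.prod_mul_distrib]
        refine Finset.prod_congr rfl fun b hb => ?_
        have hd := hne b (Finset.mem_erase.mp hb).1
        have h : (α + b * γ) * ((β + b * δ) / (α + b * γ)) = β + b * δ := by field_simp
        rw [← hscal (α + b * γ) 1 ((β + b * δ) / (α + b * γ)), mul_one, h]
      have step2 : ∏ b ∈ Finset.univ.erase b₀, (α + b * γ) = 1 := by
        rw [← hprodF]
        refine Finset.prod_nbij' (fun b => α + b * γ) (fun c => (c - α) / γ)
          (fun b hb => Finset.mem_erase.mpr ⟨hne b (Finset.mem_erase.mp hb).1, Finset.mem_univ _⟩)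
          (fun c hc => Finset.mem_erase.mpr ⟨?_, Finset.mem_univ _⟩) ?_ ?_ (fun b _ => rfl)
        · intro h
          apply (Finset.mem_erase.mp hc).1
          rw [hb₀] at h
          field_simp at h
          linear_combination h + α * h2F
        · intro b _
          field_simp
          ring
        · intro c _
          field_simp
          ring
      have step3 : ∏ b ∈ Finset.univ.erase b₀, ℓ 1 ((β + b * δ) / (α + b * γ))
          = ∏ c ∈ Finset.univ.erase (δ / γ), ℓ 1 c := by
        refine Finset.prod_nbij' (fun b => (β + b * δ) / (α + b * γ))
          (fun c => (c * α - β) / (δ - c * γ)) ?_ ?_ ?_ ?_ (fun b _ => rfl)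
        · intro b hb
          have hd := hne b (Finset.mem_erase.mp hb).1
          refine Finset.mem_erase.mpr ⟨fun h => ?_, Finset.mem_univ _⟩
          rw [div_eq_div_iff hd hγ] at h
          have : (1 : F) = 0 := by linear_combination hdet + h + h2F
          exact one_ne_zero this
        · intro c hc
          have hd : δ - c * γ ≠ 0 := fun h => (Finset.mem_erase.mp hc).1 (by
            rw [eq_div_iff hγ]
            linear_combination h + (c * γ - δ) * h2F)
          refine Finset.mem_erase.mpr ⟨fun h => ?_, Finset.mem_univ _⟩
          rw [hb₀, div_eq_div_iff hd hγ] at h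
          have : (1 : F) = 0 := by linear_combination hdet - h + (c * α * γ + 1 - α * δ) * h2F
          exact one_ne_zero this
        · intro b hb
          have hd := hne b (Finset.mem_erase.mp hb).1
          have hd2 : δ - (β + b * δ) / (α + b * γ) * γ ≠ 0 := by
            have hkey : (δ - (β + b * δ) / (α + b * γ) * γ) * (α + b * γ) = 1 := by
              field_simp
              linear_combination hdet
            exact left_ne_zero_of_mul_eq_one hkey
          rw [div_eq_iff hd2]
          field_simp
          ring
        · intro c hc
          have hd : δ - c * γ ≠ 0 := fun h => (Finset.mem_erase.mp hc).1 (by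
            rw [eq_div_iff hγ]
            linear_combination h + (c * γ - δ) * h2F)
          have hd2 : α + (c * α - β) / (δ - c * γ) * γ ≠ 0 := by
            have hkey : (α + (c * α - β) / (δ - c * γ) * γ) * (δ - c * γ) = 1 := by
              field_simp
              linear_combination hdet
            exact left_ne_zero_of_mul_eq_one hkey
          rw [div_eq_iff hd2]
          field_simp
          ring
      rw [e0, e1, step1, hCf, step2, step3, map_one, map_one]
      have hPsplit : P = ℓ 1 (δ / γ) * ∏ c ∈ Finset.univ.erase (δ / γ), ℓ 1 c :=
        (Finset.mul_prod_erase Finset.univ _ (Finset.mem_univ (δ / γ))).symm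
      have hCC : (C (ι γ) : MvPolynomial (Fin 3) k) * C (ι γ⁻¹) = 1 := by
        rw [← map_mul, ← map_mul, mul_inv_cancel₀ hγ, map_one, map_one]
      rw [hPsplit]
      linear_combination (ℓ 0 1 * ℓ 1 (δ / γ) * ∏ c ∈ Finset.univ.erase (δ / γ), ℓ 1 c) * hCC
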